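/- Let S, B, Y be nonempty finite types and let p be a probability mass function on S × B × Y such that P(S=s, B=b, Y=y) · P(Y=y) = P(S=s, Y=y) · P(B=b, Y=y) for all s, b, y. Fix s ∈ S, b ∈ B with P(S=s, B=b) > 0, P(S=s) > 0, P(B=b) > 0, and assume that for every y' ∈ Y one has P(Y=y') > 0 and P(Y=y' | B=b) > 0. Then for every y ∈ Y, the normalized adjusted posterior equals the signal-only posterior: [P(Y=y | S=s, B=b) · P(Y=y) / P(Y=y | B=b)] / (Σ_{y' ∈ Y} P(Y=y' | S=s, B=b) · P(Y=y') / P(Y=y' | B=b)) = P(Y=y | S=s). -/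

import Mathlib

/-- under the conditional-independence assumption, dividing the
full posterior `P(Y=y | S=s, B=b)` by the bias-conditional probability
`P(Y=y | B=b)`, multiplying by the prior `P(Y=y)` and renormalizing over `y`
recovers the signal-only posterior `P(Y=y | S=s)`. -/
theorem stmt_1 {S B Y : Type*} [Fintype S] [Fintype B] [Fintype Y]
    [Nonempty S] [Nonempty B] [Nonempty Y]
    (p : S × B × Y → ℝ) (hp : ∀ z, 0 ≤ p z) (hsum : ∑ z : S × B × Y, p z = 1)
    -- P(S=s, B=b, Y=y) · P(Y=y) = P(S=s, Y=y) · P(B=b, Y=y)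
    (hci : ∀ (s : S) (b : B) (y : Y),
      p (s, b, y) * (∑ s' : S, ∑ b' : B, p (s', b', y)) =
        (∑ b' : B, p (s, b', y)) * (∑ s' : S, p (s', b, y)))
    (s : S) (b : B)
    (hsb : 0 < (∑ y' : Y, p (s, b, y')))                   -- P(S=s, B=b) > 0
    (hs : 0 < (∑ b' : B, ∑ y' : Y, p (s, b', y')))         -- P(S=s) > 0
    (hb : 0 < (∑ s' : S, ∑ y' : Y, p (s', b, y')))         -- P(B=b) > 0
    (hy : ∀ y' : Y, 0 < (∑ s' : S, ∑ b' : B, p (s', b', y')))  -- P(Y=y') > 0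
    (hyb : ∀ y' : Y,                                       -- P(Y=y' | B=b) > 0
      0 < (∑ s' : S, p (s', b, y')) / (∑ s' : S, ∑ y'' : Y, p (s', b, y''))) :
    ∀ y : Y,
      (p (s, b, y) / (∑ y' : Y, p (s, b, y')) *
            (∑ s' : S, ∑ b' : B, p (s', b', y)) /
          ((∑ s' : S, p (s', b, y)) / (∑ s' : S, ∑ y' : Y, p (s', b, y')))) /
        (∑ y' : Y,
          p (s, b, y') / (∑ y'' : Y, p (s, b, y'')) *
              (∑ s' : S, ∑ b' : B, p (s', b', y')) /
            ((∑ s' : S, p (s', b, y')) /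
              (∑ s' : S, ∑ y'' : Y, p (s', b, y'')))) =
      (∑ b' : B, p (s, b', y)) / (∑ b' : B, ∑ y' : Y, p (s, b', y')) := by

  intro y
  have hby : ∀ y' : Y, 0 < ∑ s' : S, p (s', b, y') := by
    intro y'
    have h := mul_pos (hyb y') hb
    rwa [div_mul_cancel₀ _ hb.ne'] at h
  have key : ∀ y' : Y,
      p (s, b, y') / (∑ y'' : Y, p (s, b, y'')) *
          (∑ s' : S, ∑ b' : B, p (s', b', y')) /
        ((∑ s' : S, p (s', b, y')) / (∑ s' : S, ∑ y'' : Y, p (s', b, y''))) =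
      ((∑ s' : S, ∑ y'' : Y, p (s', b, y'')) / (∑ y'' : Y, p (s, b, y''))) *
        (∑ b' : B, p (s, b', y')) := by
    intro y'
    have h := hci s b y'
    have h1 : (∑ y'' : Y, p (s, b, y'')) ≠ 0 := hsb.ne'
    have h2 : (∑ s' : S, p (s', b, y')) ≠ 0 := (hby y').ne'
    have h3 : (∑ s' : S, ∑ y'' : Y, p (s', b, y'')) ≠ 0 := hb.ne'
    field_simp
    linear_combination h
  have hsum' : (∑ y' : Y,
      p (s, b, y') / (∑ y'' : Y, p (s, b, y'')) *
          (∑ s' : S, ∑ b' : B, p (s', b', y')) /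
        ((∑ s' : S, p (s', b, y')) / (∑ s' : S, ∑ y'' : Y, p (s', b, y'')))) =
      ((∑ s' : S, ∑ y'' : Y, p (s', b, y'')) / (∑ y'' : Y, p (s, b, y''))) *
        (∑ y' : Y, ∑ b' : B, p (s, b', y')) := by
    rw [Finset.mul_sum]
    exact Finset.sum_congr rfl fun y' _ => key y'
  rw [key y, hsum']
  have hc : 0 < (∑ s' : S, ∑ y'' : Y, p (s', b, y'')) / (∑ y'' : Y, p (s, b, y'')) :=
    div_pos hb hsb
  rw [mul_div_mul_left _ _ hc.ne', Finset.sum_comm]
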